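/- For the edged cube Q̄_L, the following are equivalent for any basic sequence: (i) it is convergent over the solved configuration f_solved; (ii) it is universally convergent; (iii) it is twist-finite. -/

import Mathlib

universe u v

namespace InfRubik

/-- The three axes of the cube. -/
inductive Axis : Type
  | x | y | z
  deriving DecidableEq

/-- The six colors of the Rubik's cube.  A *configuration* is a map from cells to
`Option Color`, where `none` plays the role of the non-color `NaC`. -/
inductive Color : Type
  | red | white | green | orange | yellow | blue
  deriving DecidableEq

/-- The set `L̄† = -L ∪ {0} ∪ L ∪ {±∞}` of extended coordinates. -/
inductive ExtCoord (L : Type u) : Type u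
  | neg : L → ExtCoord L
  | zero : ExtCoord L
  | pos : L → ExtCoord L
  | negInf : ExtCoord L
  | posInf : ExtCoord L

namespace ExtCoord

variable {L : Type u}

/-- The reflection `r ↦ -r`. -/
def reflect : ExtCoord L → ExtCoord L
  | .neg r => .pos r
  | .zero => .zero
  | .pos r => .neg r
  | .negInf => .posInf
  | .posInf => .negInf

@[simp] theorem reflect_reflect (a : ExtCoord L) : a.reflect.reflect = a := by
  cases a <;> rfl

/-- Whether a coordinate is `±∞`. -/
def isInfB : ExtCoord L → Bool
  | .negInf => true
  | .posInf => true
  | _ => false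

@[simp] theorem isInfB_reflect (a : ExtCoord L) : a.reflect.isInfB = a.isInfB := by
  cases a <;> rfl

/-- Whether a coordinate is `0`. -/
def isZeroB : ExtCoord L → Bool
  | .zero => true
  | _ => false

@[simp] theorem isZeroB_reflect (a : ExtCoord L) : a.reflect.isZeroB = a.isZeroB := by
  cases a <;> rfl

end ExtCoord

/-- A point of the ambient space `L̄† × L̄† × L̄†`. -/
abbrev Triple (L : Type u) := ExtCoord L × ExtCoord L × ExtCoord L

/-- The coordinate of a point along an axis. -/
def Triple.coord {L : Type u} : Axis → Triple L → ExtCoord L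
  | .x, p => p.1
  | .y, p => p.2.1
  | .z, p => p.2.2

/-- Quarter-turn rotation of the ambient space about an axis (right-hand rule). -/
def rot {L : Type u} : Axis → Triple L → Triple L
  | .x, p => (p.1, p.2.2.reflect, p.2.1)
  | .y, p => (p.2.2, p.2.1, p.1.reflect)
  | .z, p => (p.2.1.reflect, p.1, p.2.2)

/-- Inverse quarter-turn rotation of the ambient space about an axis. -/
def rotInv {L : Type u} : Axis → Triple L → Triple L
  | .x, p => (p.1, p.2.2, p.2.1.reflect)
  | .y, p => (p.2.2.reflect, p.2.1, p.1)
  | .z, p => (p.2.1, p.1.reflect, p.2.2)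

@[simp] theorem rotInv_rot {L : Type u} (i : Axis) (p : Triple L) : rotInv i (rot i p) = p := by
  cases i <;> simp [rot, rotInv]

@[simp] theorem rot_rotInv {L : Type u} (i : Axis) (p : Triple L) : rot i (rotInv i p) = p := by
  cases i <;> simp [rot, rotInv]

/-- The number of infinite coordinates of a point. -/
def infCount {L : Type u} (p : Triple L) : ℕ :=
  (if p.1.isInfB then 1 else 0) + (if p.2.1.isInfB then 1 else 0) +
    (if p.2.2.isInfB then 1 else 0)

/-- The number of zero coordinates of a point. -/
def zeroCount {L : Type u} (p : Triple L) : ℕ :=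
  (if p.1.isZeroB then 1 else 0) + (if p.2.1.isZeroB then 1 else 0) +
    (if p.2.2.isZeroB then 1 else 0)

theorem infCount_rot {L : Type u} (i : Axis) (p : Triple L) : infCount (rot i p) = infCount p := by
  obtain ⟨a, b, c⟩ := p
  cases i <;> cases ha : a.isInfB <;> cases hb : b.isInfB <;> cases hc : c.isInfB <;>
    simp [rot, infCount, ha, hb, hc]

theorem infCount_rotInv {L : Type u} (i : Axis) (p : Triple L) :
    infCount (rotInv i p) = infCount p := by
  obtain ⟨a, b, c⟩ := p
  cases i <;> cases ha : a.isInfB <;> cases hb : b.isInfB <;> cases hc : c.isInfB <;>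
    simp [rotInv, infCount, ha, hb, hc]

@[simp] theorem coord_rot_self {L : Type u} (i : Axis) (p : Triple L) :
    (rot i p).coord i = p.coord i := by
  cases i <;> rfl

@[simp] theorem coord_rotInv_self {L : Type u} (i : Axis) (p : Triple L) :
    (rotInv i p).coord i = p.coord i := by
  cases i <;> rfl

/-- A cell of the *edgeless* cube `Q_L`: a point of the ambient space with exactly one
infinite coordinate. -/
def Cell (L : Type u) : Type u := {p : Triple L // infCount p = 1}

open Classical in
/-- The underlying map on points of the quarter-turn twist `T_{i,α}`. -/
noncomputable def qtTriple {L : Type u} (i : Axis) (α : ExtCoord L) (p : Triple L) : Triple L :=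
  if p.coord i = α then rot i p else p

open Classical in
/-- The underlying map on points of the inverse quarter-turn twist `T_{i,α}⁻¹`. -/
noncomputable def qtTripleInv {L : Type u} (i : Axis) (α : ExtCoord L) (p : Triple L) : Triple L :=
  if p.coord i = α then rotInv i p else p

theorem qtTripleInv_qtTriple {L : Type u} (i : Axis) (α : ExtCoord L) (p : Triple L) :
    qtTripleInv i α (qtTriple i α p) = p := by
  classical
  by_cases h : p.coord i = α <;> simp [qtTriple, qtTripleInv, h]

theorem qtTriple_qtTripleInv {L : Type u} (i : Axis) (α : ExtCoord L) (p : Triple L) :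
    qtTriple i α (qtTripleInv i α p) = p := by
  classical
  by_cases h : p.coord i = α <;> simp [qtTriple, qtTripleInv, h]

theorem infCount_qtTriple {L : Type u} (i : Axis) (α : ExtCoord L) (p : Triple L) :
    infCount (qtTriple i α p) = infCount p := by
  classical
  by_cases h : p.coord i = α <;> simp [qtTriple, h, infCount_rot]

theorem infCount_qtTripleInv {L : Type u} (i : Axis) (α : ExtCoord L) (p : Triple L) :
    infCount (qtTripleInv i α p) = infCount p := by
  classical
  by_cases h : p.coord i = α <;> simp [qtTripleInv, h, infCount_rotInv]

/-- The quarter-turn twist `T_{i,α}` of the edgeless cube, as a permutation of cells. -/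
noncomputable def quarterTurn {L : Type u} (i : Axis) (α : ExtCoord L) : Equiv.Perm (Cell L) where
  toFun c := ⟨qtTriple i α c.1, by rw [infCount_qtTriple]; exact c.2⟩
  invFun c := ⟨qtTripleInv i α c.1, by rw [infCount_qtTripleInv]; exact c.2⟩
  left_inv c := Subtype.ext (qtTripleInv_qtTriple i α c.1)
  right_inv c := Subtype.ext (qtTriple_qtTripleInv i α c.1)

/-- The basic twists of the edgeless cube: quarter turns, half turns and reverse
quarter turns of a single layer. -/
def IsBasic (L : Type u) (π : Equiv.Perm (Cell L)) : Prop :=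
  ∃ (i : Axis) (α : ExtCoord L),
    π = quarterTurn i α ∨ π = quarterTurn i α ^ 2 ∨ π = (quarterTurn i α)⁻¹

/-! ### The edged cube -/

/-- How a quarter-turn about axis `i` transports the face tag of a cell. -/
def tagMap : Axis → Axis → Axis
  | .x, .x => .x
  | .x, .y => .z
  | .x, .z => .y
  | .y, .x => .z
  | .y, .y => .y
  | .y, .z => .x
  | .z, .x => .y
  | .z, .y => .x
  | .z, .z => .z

@[simp] theorem tagMap_tagMap (i j : Axis) : tagMap i (tagMap i j) = j := by
  cases i <;> cases j <;> rfl

theorem isInfB_coord_tagMap_rot {L : Type u} (i j : Axis) (p : Triple L) :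
    ((rot i p).coord (tagMap i j)).isInfB = (p.coord j).isInfB := by
  cases i <;> cases j <;> simp [rot, Triple.coord, tagMap]

theorem isInfB_coord_tagMap_rotInv {L : Type u} (i j : Axis) (p : Triple L) :
    ((rotInv i p).coord (tagMap i j)).isInfB = (p.coord j).isInfB := by
  cases i <;> cases j <;> simp [rotInv, Triple.coord, tagMap]

/-- A cell of the *edged* cube `Q̄_L`: a point of the ambient space together with a tag
naming an axis, such that the coordinate along the tagged axis is infinite (the tag
indicates the face to which the cell belongs). -/
def ECell (L : Type u) : Type u := {q : Triple L × Axis // (q.1.coord q.2).isInfB = true}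

open Classical in
/-- The underlying map of the quarter-turn twist `T_{i,α}` of the edged cube. -/
noncomputable def eqtFun {L : Type u} (i : Axis) (α : ExtCoord L) (q : Triple L × Axis) :
    Triple L × Axis :=
  if q.1.coord i = α then (rot i q.1, tagMap i q.2) else q

open Classical in
/-- The underlying map of the reverse quarter-turn twist of the edged cube. -/
noncomputable def eqtFunInv {L : Type u} (i : Axis) (α : ExtCoord L) (q : Triple L × Axis) :
    Triple L × Axis :=
  if q.1.coord i = α then (rotInv i q.1, tagMap i q.2) else q

theorem eqtFunInv_eqtFun {L : Type u} (i : Axis) (α : ExtCoord L) (q : Triple L × Axis) :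
    eqtFunInv i α (eqtFun i α q) = q := by
  classical
  by_cases h : q.1.coord i = α <;> simp [eqtFun, eqtFunInv, h]

theorem eqtFun_eqtFunInv {L : Type u} (i : Axis) (α : ExtCoord L) (q : Triple L × Axis) :
    eqtFun i α (eqtFunInv i α q) = q := by
  classical
  by_cases h : q.1.coord i = α <;> simp [eqtFun, eqtFunInv, h]

theorem isInfB_eqtFun {L : Type u} (i : Axis) (α : ExtCoord L) (q : Triple L × Axis) :
    (((eqtFun i α q).1.coord (eqtFun i α q).2)).isInfB = ((q.1.coord q.2)).isInfB := by
  classical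
  by_cases h : q.1.coord i = α <;> simp [eqtFun, h, isInfB_coord_tagMap_rot]

theorem isInfB_eqtFunInv {L : Type u} (i : Axis) (α : ExtCoord L) (q : Triple L × Axis) :
    (((eqtFunInv i α q).1.coord (eqtFunInv i α q).2)).isInfB = ((q.1.coord q.2)).isInfB := by
  classical
  by_cases h : q.1.coord i = α <;> simp [eqtFunInv, h, isInfB_coord_tagMap_rotInv]

/-- The quarter-turn twist `T_{i,α}` of the edged cube, as a permutation of cells.  A face
twist moves, besides the cells of its face, also the coupled edge and corner cells of the
adjacent faces lying in the twisted layer. -/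
noncomputable def equarterTurn {L : Type u} (i : Axis) (α : ExtCoord L) :
    Equiv.Perm (ECell L) where
  toFun c := ⟨eqtFun i α c.1, by rw [isInfB_eqtFun]; exact c.2⟩
  invFun c := ⟨eqtFunInv i α c.1, by rw [isInfB_eqtFunInv]; exact c.2⟩
  left_inv c := Subtype.ext (eqtFunInv_eqtFun i α c.1)
  right_inv c := Subtype.ext (eqtFun_eqtFunInv i α c.1)

/-- The basic twists of the edged cube. -/
def IsEBasic (L : Type u) (π : Equiv.Perm (ECell L)) : Prop :=
  ∃ (i : Axis) (α : ExtCoord L),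
    π = equarterTurn i α ∨ π = equarterTurn i α ^ 2 ∨ π = (equarterTurn i α)⁻¹

/-! ### Transfinite sequences of twists and their action on labellings -/

open Classical in
/-- The eventual value of an ordinal-indexed family of `Option`-values: `some v` if the family
stabilizes on `some v` before `lam`, and `none` otherwise. -/
noncomputable def eventualVal {X : Type u} (lam : Ordinal.{v})
    (g : ∀ η, η < lam → Option X) : Option X :=
  if h : ∃ v : X, ∃ γ, γ < lam ∧ ∀ η (hη : η < lam), γ ≤ η → g η hη = some v
  then some h.choose else none

/-- Applying an ordinal-indexed sequence of permutations to an initial labelling: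
`run σ f0 θ` is the labelling obtained after the first `θ` moves, with
`f_{η+1}(c) = f_η(σ_η⁻¹ c)` at successors and the eventual value (or `NaC = none`)
at limits. -/
noncomputable def run {Cl : Type v} {X : Type u} (σ : Ordinal.{v} → Equiv.Perm Cl)
    (f0 : Cl → Option X) (θ : Ordinal.{v}) : Cl → Option X :=
  Ordinal.limitRecOn (motive := fun _ => Cl → Option X) θ f0
    (fun η fη c => fη ((σ η)⁻¹ c))
    (fun lam _ prev c => eventualVal lam (fun η h => prev η h c))

/-- A (transfinite) sequence of twists of length `len`, each of which satisfies the
predicate `B` (being a basic twist). -/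
structure TwistSeq (Cl : Type v) (B : Equiv.Perm Cl → Prop) : Type (v + 1) where
  len : Ordinal.{v}
  seq : Ordinal.{v} → Equiv.Perm Cl
  basic : ∀ η, η < len → B (seq η)

namespace TwistSeq

variable {Cl : Type v} {B : Equiv.Perm Cl → Prop}

/-- The terminal labelling obtained by applying a sequence of twists to `f0`. -/
noncomputable def terminal (s : TwistSeq Cl B) {X : Type u} (f0 : Cl → Option X) :
    Cl → Option X :=
  run s.seq f0 s.len

/-- A sequence of twists is convergent over `f0` if the terminal labelling is legal,
i.e. never takes the value `NaC = none`. -/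
def ConvOver (s : TwistSeq Cl B) {X : Type u} (f0 : Cl → Option X) : Prop :=
  ∀ c, s.terminal f0 c ≠ none

/-- A sequence of twists is universally convergent if it is convergent over the identity
labelling. -/
def UnivConv (s : TwistSeq Cl B) : Prop := s.ConvOver (fun c => some c)

/-- A sequence is twist-finite if each twist occurs in it only finitely many times. -/
def TwistFinite (s : TwistSeq Cl B) : Prop :=
  ∀ π : Equiv.Perm Cl, {η : Ordinal | η < s.len ∧ s.seq η = π}.Finite

/-- Two sequences are equivalent, `σ⃗ ∼ τ⃗`, when they produce the same terminal
configuration over every initial configuration. -/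
def Sim (s t : TwistSeq Cl B) : Prop :=
  ∀ f : Cl → Option Color, s.terminal f = t.terminal f

/-- Concatenation of twist sequences: `s.concat t` performs `s` and then `t`. -/
noncomputable def concat (s t : TwistSeq Cl B) : TwistSeq Cl B where
  len := s.len + t.len
  seq := fun η => if η < s.len then s.seq η else t.seq (η - s.len)
  basic := by
    intro η hη
    by_cases h : η < s.len
    · simpa [h] using s.basic η h
    · have hc : 0 < t.len := by
        rcases eq_zero_or_pos t.len with h0 | h0
        · rw [h0, add_zero] at hη; exact absurd hη h
        · exact h0
      have h2 : η - s.len < t.len := Ordinal.sub_lt_of_lt_add hη hc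
      simpa [h] using t.basic _ h2

/-- The empty sequence of twists. -/
def empty (Cl : Type v) (B : Equiv.Perm Cl → Prop) : TwistSeq Cl B where
  len := 0
  seq := fun _ => 1
  basic := fun η hη => absurd hη (by simp)

/-- `n`-fold self-concatenation of a sequence of twists. -/
noncomputable def npow (s : TwistSeq Cl B) : ℕ → TwistSeq Cl B
  | 0 => empty Cl B
  | n + 1 => (npow s n).concat s

end TwistSeq

/-- Basic sequences of twists of the edgeless cube `Q_L`. -/
abbrev BasicSeq (L : Type u) := TwistSeq (Cell L) (IsBasic L)

/-- Basic sequences of twists of the edged cube `Q̄_L`. -/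
abbrev EBasicSeq (L : Type u) := TwistSeq (ECell L) (IsEBasic L)

/-- `f` is accessible from `f0` when some basic sequence applied to `f0` is convergent with
terminal configuration `f`. -/
def Accessible {Cl : Type v} (B : Equiv.Perm Cl → Prop) (f0 f : Cl → Option Color) : Prop :=
  ∃ s : TwistSeq Cl B, s.ConvOver f0 ∧ s.terminal f0 = f

/-- A labelling is legal if it never takes the value `NaC = none`. -/
def IsLegal {Cl : Type v} {X : Type u} (f : Cl → Option X) : Prop := ∀ c, f c ≠ none

/-! ### Clusters, faces, and distinguished configurations -/

/-- The group of permutations of cells of the edgeless cube generated by the basic twists. -/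
def twistGroup (L : Type u) : Subgroup (Equiv.Perm (Cell L)) :=
  Subgroup.closure {π | IsBasic L π}

/-- The cluster of a cell of the edgeless cube: its orbit under the group generated by the
basic twists. -/
def cluster {L : Type u} (c : Cell L) : Set (Cell L) :=
  {d | ∃ g ∈ twistGroup L, g c = d}

/-- The group of permutations of cells of the edged cube generated by the basic twists. -/
def etwistGroup (L : Type u) : Subgroup (Equiv.Perm (ECell L)) :=
  Subgroup.closure {π | IsEBasic L π}

/-- The cluster of a cell of the edged cube. -/
def ecluster {L : Type u} (c : ECell L) : Set (ECell L) :=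
  {d | ∃ g ∈ etwistGroup L, g c = d}

open Classical in
/-- The solved configuration of the edgeless cube: each face gets one of six distinct
colors. -/
noncomputable def fSolved (L : Type u) : Cell L → Option Color := fun c =>
  if c.1.1 = ExtCoord.posInf then some .red
  else if c.1.1 = ExtCoord.negInf then some .orange
  else if c.1.2.1 = ExtCoord.posInf then some .blue
  else if c.1.2.1 = ExtCoord.negInf then some .green
  else if c.1.2.2 = ExtCoord.posInf then some .white
  else some .yellow

/-- The color of each face: the face is named by the axis and the sign (`true` = `+∞`). -/
def faceColor : Axis → Bool → Color
  | .x, true => .red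
  | .x, false => .orange
  | .y, true => .blue
  | .y, false => .green
  | .z, true => .white
  | .z, false => .yellow

open Classical in
/-- The solved configuration of the edged cube. -/
noncomputable def efSolved (L : Type u) : ECell L → Option Color := fun c =>
  if c.1.1.coord c.1.2 = ExtCoord.posInf then some (faceColor c.1.2 true)
  else some (faceColor c.1.2 false)

/-- A center cell of the edgeless cube: two of its coordinates are `0`. -/
def IsCenter {L : Type u} (c : Cell L) : Prop := zeroCount c.1 = 2

/-- The global rotation of the whole cube about an axis, as a permutation of the cells of
the edgeless cube. -/
def rotAllPerm {L : Type u} (i : Axis) : Equiv.Perm (Cell L) where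
  toFun c := ⟨rot i c.1, by rw [infCount_rot]; exact c.2⟩
  invFun c := ⟨rotInv i c.1, by rw [infCount_rotInv]; exact c.2⟩
  left_inv c := Subtype.ext (rotInv_rot i c.1)
  right_inv c := Subtype.ext (rot_rotInv i c.1)

/-- The group of global rotations of the edgeless cube. -/
def rotGroup (L : Type u) : Subgroup (Equiv.Perm (Cell L)) :=
  Subgroup.closure (Set.range (rotAllPerm (L := L)))

/-- A configuration of the edgeless cube is standard if every non-center cluster contains
exactly four cells of each of the six colors, and its restriction to the center cluster is
obtained from the solved configuration by a global rotation of the cube. -/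
def Standard {L : Type u} (f : Cell L → Option Color) : Prop :=
  (∀ c : Cell L, ¬IsCenter c → ∀ γ : Color, {d ∈ cluster c | f d = some γ}.ncard = 4) ∧
  ∃ g ∈ rotGroup L, ∀ d : Cell L, IsCenter d → f d = fSolved L (g⁻¹ d)

/-- A configuration is invariant under all quarter-turn face twists. -/
def FaceInvariant {L : Type u} (f : Cell L → Option Color) : Prop :=
  ∀ (i : Axis) (α : ExtCoord L), α.isInfB = true →
    ∀ c : Cell L, f ((quarterTurn i α)⁻¹ c) = f c

/-! ### Quadrants and cluster configurations -/

/-- The upper-right quadrant `D` of the Front face: the cells `(x, y, +∞)` with `x ∈ L`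
and `y ∈ {0} ∪ L`; every non-center cluster has a unique representative in `D`. -/
def Dset (L : Type u) : Set (Cell L) :=
  {c | ∃ (a : L) (b : ExtCoord L), (b = ExtCoord.zero ∨ ∃ r : L, b = ExtCoord.pos r) ∧
    c.1 = (ExtCoord.pos a, b, ExtCoord.posInf)}

/-- Two cells lie in the same face quadrant (an image of `D` under a global rotation). -/
def SameQuadrant {L : Type u} (d d' : Cell L) : Prop :=
  ∃ g ∈ rotGroup L, d ∈ (fun c => g c) '' Dset L ∧ d' ∈ (fun c => g c) '' Dset L

/-! ### Coupled cells of the edged cube -/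

/-- Two cells of the edged cube are coupled if they occupy the same location but belong to
different faces (they are parts of a common edge or corner cubie). -/
def Coupled {L : Type u} (c c' : ECell L) : Prop := c.1.1 = c'.1.1 ∧ c.1.2 ≠ c'.1.2

/-- An edge cell: exactly two infinite coordinates. -/
def IsEdgeCell {L : Type u} (c : ECell L) : Prop := infCount c.1.1 = 2

/-- A corner cell: three infinite coordinates. -/
def IsCornerCell {L : Type u} (c : ECell L) : Prop := infCount c.1.1 = 3

/-- An edge-cross cell: an edge cell one of whose coordinates is `0`. -/
def IsEdgeCross {L : Type u} (c : ECell L) : Prop :=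
  IsEdgeCell c ∧ 0 < zeroCount c.1.1


/-! ### Auxiliary machinery for the main theorem -/

section AuxInfra

universe w

instance : Fintype Axis :=
  ⟨⟨{Axis.x, Axis.y, Axis.z}, by decide⟩, by intro a; cases a <;> decide⟩

theorem ordLimInd {motive : Ordinal.{w} → Prop} (o : Ordinal.{w}) (zero : motive 0)
    (succ : ∀ o, motive o → motive (Order.succ o))
    (limit : ∀ o, Order.IsSuccLimit o → (∀ o' < o, motive o') → motive o) : motive o :=
  Ordinal.limitRecOn o zero (fun o h => by rw [Ordinal.add_one_eq_succ]; exact succ o h) limit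

theorem run_zero {Cl : Type v} {X : Type u} (σ : Ordinal.{v} → Equiv.Perm Cl)
    (f0 : Cl → Option X) : run σ f0 0 = f0 :=
  Ordinal.limitRecOn_zero ..

theorem run_succ {Cl : Type v} {X : Type u} (σ : Ordinal.{v} → Equiv.Perm Cl)
    (f0 : Cl → Option X) (η : Ordinal.{v}) :
    run σ f0 (Order.succ η) = fun c => run σ f0 η ((σ η)⁻¹ c) :=
  Ordinal.limitRecOn_succ ..

theorem run_limit {Cl : Type v} {X : Type u} (σ : Ordinal.{v} → Equiv.Perm Cl)
    (f0 : Cl → Option X) (lam : Ordinal.{v}) (h : Order.IsSuccLimit lam) :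
    run σ f0 lam = fun c => eventualVal lam (fun η _ => run σ f0 η c) :=
  Ordinal.limitRecOn_limit _ _ _ _ h

theorem eventualVal_eq_some {X : Type u} {lam : Ordinal.{v}} {g : ∀ η, η < lam → Option X}
    {v : X} {γ : Ordinal.{v}} (hγ : γ < lam)
    (h : ∀ η (hη : η < lam), γ ≤ η → g η hη = some v) :
    eventualVal lam g = some v := by
  classical
  have hex : ∃ v : X, ∃ γ, γ < lam ∧ ∀ η (hη : η < lam), γ ≤ η → g η hη = some v := ⟨v, γ, hγ, h⟩
  rw [eventualVal, dif_pos hex]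
  obtain ⟨γ', hγ', h'⟩ := hex.choose_spec
  have h1 := h (max γ γ') (max_lt hγ hγ') (le_max_left _ _)
  have h2 := h' (max γ γ') (max_lt hγ hγ') (le_max_right _ _)
  rw [h1] at h2
  exact h2.symm

theorem eventualVal_some_elim {X : Type u} {lam : Ordinal.{v}} {g : ∀ η, η < lam → Option X}
    {v : X} (h : eventualVal lam g = some v) :
    ∃ γ, γ < lam ∧ ∀ η (hη : η < lam), γ ≤ η → g η hη = some v := by
  classical
  rw [eventualVal] at h
  split_ifs at h with hex
  · obtain ⟨γ', hγ', h'⟩ := hex.choose_spec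
    have hv : hex.choose = v := by injection h
    exact ⟨γ', hγ', fun η hη hge => by rw [h' η hη hge, hv]⟩

theorem eventualVal_eq_none {X : Type u} {lam : Ordinal.{v}} {g : ∀ η, η < lam → Option X}
    (h : ¬ ∃ v : X, ∃ γ, γ < lam ∧ ∀ η (hη : η < lam), γ ≤ η → g η hη = some v) :
    eventualVal lam g = none := by
  classical
  rw [eventualVal, dif_neg h]

end AuxInfra

section Geom

variable {L : Type u}

/-- Sign-forgetting normalization of a coordinate. -/
def sig : ExtCoord L → ExtCoord L
  | .neg r => .pos r
  | .zero => .zero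
  | .pos r => .pos r
  | .negInf => .posInf
  | .posInf => .posInf

@[simp] theorem sig_reflect (a : ExtCoord L) : sig a.reflect = sig a := by cases a <;> rfl

/-- Multiset of normalized coordinates of a position. -/
def sigM (p : Triple L) : Multiset (ExtCoord L) := {sig p.1, sig p.2.1, sig p.2.2}

/-- The sign of a coordinate (junk value `true` at `zero`). -/
def sgB : ExtCoord L → Bool
  | .neg _ => false
  | .negInf => false
  | _ => true

/-- The axis carrying the unique finite coordinate of a wing position (junk otherwise). -/
def finAxis (p : Triple L) : Axis :=
  if p.1.isInfB then (if p.2.1.isInfB then .z else .y) else .x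

def thirdAxis : Axis → Axis → Axis
  | .x, .y => .z | .y, .x => .z
  | .y, .z => .x | .z, .y => .x
  | .z, .x => .y | .x, .z => .y
  | a, _ => a

def epsB : Axis → Axis → Bool
  | .x, .y => true | .y, .z => true | .z, .x => true
  | _, _ => false

/-- Chirality class of a wing sticker. -/
def chi (q : Triple L × Axis) : Bool :=
  (sgB (q.1.coord (finAxis q.1))) ^^ ((sgB (q.1.coord q.2)) ^^
    ((sgB (q.1.coord (thirdAxis (finAxis q.1) q.2))) ^^ epsB (finAxis q.1) q.2))

theorem zeroCount_rot (i : Axis) (p : Triple L) : zeroCount (rot i p) = zeroCount p := by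
  obtain ⟨a, b, c⟩ := p
  cases i <;> cases ha : a.isZeroB <;> cases hb : b.isZeroB <;> cases hc : c.isZeroB <;>
    simp [rot, zeroCount, ha, hb, hc]

theorem sigM_rot (i : Axis) (p : Triple L) : sigM (rot i p) = sigM p := by
  obtain ⟨a, b, c⟩ := p
  cases i <;> simp only [rot, sigM, sig_reflect]
  · exact congrArg _ (Multiset.cons_swap _ _ _)
  · refine Multiset.cons_swap _ _ _ |>.trans (congrArg _ (Multiset.cons_swap _ _ _)) |>.trans
      (Multiset.cons_swap _ _ _)
  · exact Multiset.cons_swap _ _ _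

theorem chi_rot (i : Axis) (p : Triple L) (t : Axis) (hv : (p.coord t).isInfB = true)
    (hw : infCount p = 2) (hz : zeroCount p = 0) :
    chi (rot i p, tagMap i t) = chi (p, t) := by
  obtain ⟨a, b, c⟩ := p
  cases i <;> cases t <;> cases a <;> cases b <;> cases c <;>
    simp_all [chi, rot, tagMap, Triple.coord, finAxis, thirdAxis, epsB, sgB,
      ExtCoord.isInfB, ExtCoord.reflect, infCount, zeroCount, ExtCoord.isZeroB]

end Geom

section ECellTwist

variable {L : Type u}

/-- The geometric invariant of a cell, preserved by all basic twists. -/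
def GeomInv (c : ECell L) : ℕ × ℕ × Multiset (ExtCoord L) × Bool :=
  (infCount c.1.1, zeroCount c.1.1, sigM c.1.1,
    if infCount c.1.1 = 2 ∧ zeroCount c.1.1 = 0 then chi c.1 else false)

def rotCellE (i : Axis) (c : ECell L) : ECell L :=
  ⟨(rot i c.1.1, tagMap i c.1.2), by
    have := isInfB_coord_tagMap_rot i c.1.2 c.1.1
    simp only [this]; exact c.2⟩

def rotInvCellE (i : Axis) (c : ECell L) : ECell L :=
  ⟨(rotInv i c.1.1, tagMap i c.1.2), by
    have := isInfB_coord_tagMap_rotInv i c.1.2 c.1.1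
    simp only [this]; exact c.2⟩

theorem rotCellE_rotInvCellE (i : Axis) (c : ECell L) : rotCellE i (rotInvCellE i c) = c := by
  apply Subtype.ext
  simp [rotCellE, rotInvCellE]

open Classical in
theorem equarterTurn_apply (i : Axis) (α : ExtCoord L) (c : ECell L) :
    equarterTurn i α c = if c.1.1.coord i = α then rotCellE i c else c := by
  classical
  apply Subtype.ext
  show eqtFun i α c.1 = _
  by_cases h : c.1.1.coord i = α <;>
    simp [equarterTurn, eqtFun, rotCellE, h, if_pos, if_neg]

open Classical in
theorem equarterTurn_inv_apply (i : Axis) (α : ExtCoord L) (c : ECell L) :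
    (equarterTurn i α)⁻¹ c = if c.1.1.coord i = α then rotInvCellE i c else c := by
  classical
  apply Subtype.ext
  show eqtFunInv i α c.1 = _
  by_cases h : c.1.1.coord i = α <;>
    simp [equarterTurn, Equiv.Perm.inv_def, Equiv.symm, eqtFunInv, rotInvCellE, h]

theorem geomInv_rotCellE (i : Axis) (c : ECell L) : GeomInv (rotCellE i c) = GeomInv c := by
  have h1 : infCount (rotCellE i c).1.1 = infCount c.1.1 := infCount_rot i c.1.1
  have h2 : zeroCount (rotCellE i c).1.1 = zeroCount c.1.1 := zeroCount_rot i c.1.1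
  have h3 : sigM (rotCellE i c).1.1 = sigM c.1.1 := sigM_rot i c.1.1
  unfold GeomInv
  rw [h1, h2, h3]
  by_cases hw : infCount c.1.1 = 2 ∧ zeroCount c.1.1 = 0
  · rw [if_pos hw, if_pos hw]
    exact congrArg _ (congrArg _ (congrArg _ (chi_rot i c.1.1 c.1.2 c.2 hw.1 hw.2)))
  · rw [if_neg hw, if_neg hw]

theorem geomInv_rotInvCellE (i : Axis) (c : ECell L) : GeomInv (rotInvCellE i c) = GeomInv c := by
  conv_rhs => rw [← rotCellE_rotInvCellE i c]
  rw [geomInv_rotCellE]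

open Classical in
theorem geomInv_eqt (i : Axis) (α : ExtCoord L) (c : ECell L) :
    GeomInv (equarterTurn i α c) = GeomInv c := by
  rw [equarterTurn_apply]; split_ifs
  · exact geomInv_rotCellE i c
  · rfl

open Classical in
theorem geomInv_eqt_inv (i : Axis) (α : ExtCoord L) (c : ECell L) :
    GeomInv ((equarterTurn i α)⁻¹ c) = GeomInv c := by
  rw [equarterTurn_inv_apply]; split_ifs
  · exact geomInv_rotInvCellE i c
  · rfl

theorem sq_apply {β : Type v} (π : Equiv.Perm β) (c : β) : (π ^ 2) c = π (π c) := by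
  rw [pow_two]; rfl

theorem sq_inv_apply {β : Type v} (π : Equiv.Perm β) (c : β) :
    (π ^ 2)⁻¹ c = π⁻¹ (π⁻¹ c) := by
  rw [← inv_pow, pow_two]; rfl

theorem geomInv_basic {π : Equiv.Perm (ECell L)} (h : IsEBasic L π) (c : ECell L) :
    GeomInv (π c) = GeomInv c := by
  obtain ⟨i, α, h | h | h⟩ := h <;> subst h
  · exact geomInv_eqt i α c
  · rw [sq_apply, geomInv_eqt, geomInv_eqt]
  · exact geomInv_eqt_inv i α c

theorem geomInv_basic_inv {π : Equiv.Perm (ECell L)} (h : IsEBasic L π) (c : ECell L) :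
    GeomInv (π⁻¹ c) = GeomInv c := by
  obtain ⟨i, α, h | h | h⟩ := h <;> subst h
  · exact geomInv_eqt_inv i α c
  · rw [sq_inv_apply, geomInv_eqt_inv, geomInv_eqt_inv]
  · rw [inv_inv]; exact geomInv_eqt i α c

open Classical in
theorem pos_local_eqt (i : Axis) (α : ExtCoord L) {c c' : ECell L} (h : c.1.1 = c'.1.1) :
    (equarterTurn i α c).1.1 = (equarterTurn i α c').1.1 := by
  rw [equarterTurn_apply, equarterTurn_apply]
  by_cases hc : c.1.1.coord i = α
  · rw [if_pos hc, if_pos (h ▸ hc)]; simp [rotCellE, h]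
  · rw [if_neg hc, if_neg (h ▸ hc)]; exact h

open Classical in
theorem pos_local_eqt_inv (i : Axis) (α : ExtCoord L) {c c' : ECell L} (h : c.1.1 = c'.1.1) :
    ((equarterTurn i α)⁻¹ c).1.1 = ((equarterTurn i α)⁻¹ c').1.1 := by
  rw [equarterTurn_inv_apply, equarterTurn_inv_apply]
  by_cases hc : c.1.1.coord i = α
  · rw [if_pos hc, if_pos (h ▸ hc)]; simp [rotInvCellE, h]
  · rw [if_neg hc, if_neg (h ▸ hc)]; exact h

theorem pos_local_basic {π : Equiv.Perm (ECell L)} (hb : IsEBasic L π) {c c' : ECell L}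
    (h : c.1.1 = c'.1.1) : (π c).1.1 = (π c').1.1 := by
  obtain ⟨i, α, hf | hf | hf⟩ := hb <;> subst hf
  · exact pos_local_eqt i α h
  · rw [sq_apply, sq_apply]; exact pos_local_eqt i α (pos_local_eqt i α h)
  · exact pos_local_eqt_inv i α h

theorem pos_local_basic_inv {π : Equiv.Perm (ECell L)} (hb : IsEBasic L π) {c c' : ECell L}
    (h : c.1.1 = c'.1.1) : (π⁻¹ c).1.1 = (π⁻¹ c').1.1 := by
  obtain ⟨i, α, hf | hf | hf⟩ := hb <;> subst hf
  · exact pos_local_eqt_inv i α h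
  · rw [sq_inv_apply, sq_inv_apply]
    exact pos_local_eqt_inv i α (pos_local_eqt_inv i α h)
  · exact pos_local_eqt i α h

open Classical in
theorem eqt_fix (i : Axis) (α : ExtCoord L) {c : ECell L} (h : c.1.1.coord i ≠ α) :
    equarterTurn i α c = c := by rw [equarterTurn_apply, if_neg h]

theorem basic_moving {π : Equiv.Perm (ECell L)} (h : IsEBasic L π) {c : ECell L}
    (hm : π c ≠ c) :
    ∃ i, π = equarterTurn i (c.1.1.coord i) ∨ π = equarterTurn i (c.1.1.coord i) ^ 2 ∨
      π = (equarterTurn i (c.1.1.coord i))⁻¹ := by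
  obtain ⟨i, α, hf⟩ := h
  refine ⟨i, ?_⟩
  by_cases hα : c.1.1.coord i = α
  · rw [hα]; exact hf
  · exfalso
    apply hm
    obtain hf | hf | hf := hf <;> subst hf
    · exact eqt_fix i α hα
    · rw [sq_apply, eqt_fix i α hα, eqt_fix i α hα]
    · have h0 : equarterTurn i α c = c := eqt_fix i α hα
      conv_lhs => rw [← h0]
      exact Equiv.symm_apply_apply _ _

end ECellTwist

section RunLemmas

universe w

variable {L : Type u}

/-- The run over the identity labelling: tracks origins of cells. -/
noncomputable def runId (s : EBasicSeq L) (θ : Ordinal.{u}) : ECell L → Option (ECell L) :=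
  run s.seq (fun c => some c) θ

theorem runId_zero (s : EBasicSeq L) (c : ECell L) : runId s 0 c = some c := by
  rw [runId, run_zero]

theorem runId_succ (s : EBasicSeq L) (θ : Ordinal.{u}) (c : ECell L) :
    runId s (Order.succ θ) c = runId s θ ((s.seq θ)⁻¹ c) := by
  rw [runId, run_succ]; rfl

theorem runId_limit (s : EBasicSeq L) {θ : Ordinal.{u}} (h : Order.IsSuccLimit θ) (c : ECell L) :
    runId s θ c = eventualVal θ (fun η _ => runId s η c) := by
  rw [runId, run_limit _ _ _ h]; rfl

/-- Naturality: the run over any initial labelling is determined by the identity run. -/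
theorem runId_nat (s : EBasicSeq L) (θ : Ordinal.{u}) :
    ∀ (c d : ECell L), runId s θ c = some d →
      ∀ {X : Type w} (f0 : ECell L → Option X), run s.seq f0 θ c = f0 d := by
  induction' θ using ordLimInd with θ IH θ hθ IH
  · intro c d h X f0
    rw [runId_zero] at h
    rw [run_zero]
    injection h with h; rw [h]
  · intro c d h X f0
    rw [runId_succ] at h
    rw [run_succ]
    exact IH _ _ h f0
  · intro c d h X f0
    rw [runId_limit s hθ] at h
    obtain ⟨γ, hγ, hst⟩ := eventualVal_some_elim h
    rw [run_limit _ _ _ hθ]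
    cases hf : f0 d with
    | some w =>
      refine eventualVal_eq_some hγ (fun η hη hge => ?_)
      rw [IH η hη c d (hst η hη hge) f0, hf]
    | none =>
      refine eventualVal_eq_none ?_
      rintro ⟨v, γ', hγ', hst'⟩
      have h1 := IH (max γ γ') (max_lt hγ hγ') c d (hst _ (max_lt hγ hγ') (le_max_left _ _)) f0
      have h2 := hst' (max γ γ') (max_lt hγ hγ') (le_max_right _ _)
      rw [h1, hf] at h2
      exact absurd h2.symm (Option.some_ne_none _)

/-- Injectivity of origins. -/
theorem runId_inj (s : EBasicSeq L) (θ : Ordinal.{u}) :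
    ∀ (c c' d : ECell L), runId s θ c = some d → runId s θ c' = some d → c = c' := by
  induction' θ using ordLimInd with θ IH θ hθ IH
  · intro c c' d h h'
    rw [runId_zero] at h h'
    injection h with h; injection h' with h'; rw [h, h']
  · intro c c' d h h'
    rw [runId_succ] at h h'
    have := IH _ _ _ h h'
    exact (Equiv.injective _) this
  · intro c c' d h h'
    rw [runId_limit s hθ] at h h'
    obtain ⟨γ, hγ, hst⟩ := eventualVal_some_elim h
    obtain ⟨γ', hγ', hst'⟩ := eventualVal_some_elim h'
    have hlt : max γ γ' < θ := max_lt hγ hγ'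
    exact IH _ hlt c c' d (hst _ hlt (le_max_left _ _)) (hst' _ hlt (le_max_right _ _))

/-- Origins have the same geometric invariant. -/
theorem runId_geom (s : EBasicSeq L) (θ : Ordinal.{u}) (hθ : θ ≤ s.len) :
    ∀ (c d : ECell L), runId s θ c = some d → GeomInv c = GeomInv d := by
  induction' θ using ordLimInd with θ IH θ hlim IH
  · intro c d h
    rw [runId_zero] at h
    injection h with h; rw [h]
  · intro c d h
    rw [runId_succ] at h
    have hb : IsEBasic L (s.seq θ) := s.basic θ (Order.succ_le_iff.1 hθ)
    have h1 : GeomInv c = GeomInv ((s.seq θ)⁻¹ c) := (geomInv_basic_inv hb c).symm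
    exact h1.trans (IH ((Order.le_succ θ).trans hθ) _ _ h)
  · intro c d h
    rw [runId_limit s hlim] at h
    obtain ⟨γ, hγ, hst⟩ := eventualVal_some_elim h
    exact IH γ hγ ((le_of_lt hγ).trans hθ) c d (hst γ hγ le_rfl)

/-- Origins of cells at the same location are at the same location. -/
theorem runId_pos (s : EBasicSeq L) (θ : Ordinal.{u}) (hθ : θ ≤ s.len) :
    ∀ (c c' d d' : ECell L), runId s θ c = some d → runId s θ c' = some d' →
      c.1.1 = c'.1.1 → d.1.1 = d'.1.1 := by
  induction' θ using ordLimInd with θ IH θ hlim IH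
  · intro c c' d d' h h' hp
    rw [runId_zero] at h h'
    injection h with h; injection h' with h'; rw [← h, ← h']; exact hp
  · intro c c' d d' h h' hp
    rw [runId_succ] at h h'
    have hb : IsEBasic L (s.seq θ) := s.basic θ (Order.succ_le_iff.1 hθ)
    exact IH ((Order.le_succ θ).trans hθ) _ _ _ _ h h' (pos_local_basic_inv hb hp)
  · intro c c' d d' h h' hp
    rw [runId_limit s hlim] at h h'
    obtain ⟨γ, hγ, hst⟩ := eventualVal_some_elim h
    obtain ⟨γ', hγ', hst'⟩ := eventualVal_some_elim h'
    have hlt : max γ γ' < θ := max_lt hγ hγ'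
    exact IH _ hlt ((le_of_lt hlt).trans hθ) c c' d d'
      (hst _ hlt (le_max_left _ _)) (hst' _ hlt (le_max_right _ _)) hp

end RunLemmas

section Stab

variable {L : Type u}

/-- The set of occurrences of the twist `π` before stage `θ`. -/
def occ (s : EBasicSeq L) (π : Equiv.Perm (ECell L)) (θ : Ordinal.{u}) : Set Ordinal.{u} :=
  {η | η < θ ∧ η < s.len ∧ s.seq η = π}

theorem occ_mono (s : EBasicSeq L) (π : Equiv.Perm (ECell L)) {θ θ' : Ordinal.{u}}
    (h : θ ≤ θ') : occ s π θ ⊆ occ s π θ' :=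
  fun η hη => ⟨lt_of_lt_of_le hη.1 h, hη.2⟩

theorem runId_stab (s : EBasicSeq L) :
    ∀ θ : Ordinal.{u}, θ ≤ s.len → (∀ π, (occ s π θ).Finite) → ∀ c, ∃ d, runId s θ c = some d := by
  intro θ
  induction' θ using ordLimInd with θ IH θ hlim IH
  · intro _ _ c
    exact ⟨c, runId_zero s c⟩
  · intro hθ hfin c
    obtain ⟨d, hd⟩ := IH ((Order.le_succ θ).trans hθ)
      (fun π => (hfin π).subset (occ_mono s π (Order.le_succ θ))) ((s.seq θ)⁻¹ c)
    exact ⟨d, by rw [runId_succ]; exact hd⟩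
  · intro hθ hfin c
    -- the set of stages below θ at which the cell `c` is moved
    set Mv : Set Ordinal.{u} := {η | η < θ ∧ (s.seq η)⁻¹ c ≠ c} with hMv
    have hMvfin : Mv.Finite := by
      have hsub : Mv ⊆ ⋃ i : Axis,
          (occ s (equarterTurn i (c.1.1.coord i)) θ ∪
            (occ s (equarterTurn i (c.1.1.coord i) ^ 2) θ ∪
              occ s ((equarterTurn i (c.1.1.coord i))⁻¹) θ)) := by
        intro η hη
        obtain ⟨hηθ, hmv⟩ := hη
        have hb : IsEBasic L (s.seq η) := s.basic η (lt_of_lt_of_le hηθ hθ)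
        have hmv' : (s.seq η) c ≠ c := by
          intro hfix
          apply hmv
          conv_lhs => rw [← hfix]
          exact Equiv.symm_apply_apply _ _
        obtain ⟨i, hf⟩ := basic_moving hb hmv'
        refine Set.mem_iUnion.2 ⟨i, ?_⟩
        obtain hf | hf | hf := hf
        · exact Or.inl ⟨hηθ, lt_of_lt_of_le hηθ hθ, hf⟩
        · exact Or.inr (Or.inl ⟨hηθ, lt_of_lt_of_le hηθ hθ, hf⟩)
        · exact Or.inr (Or.inr ⟨hηθ, lt_of_lt_of_le hηθ hθ, hf⟩)
      exact Set.Finite.subset (Set.finite_iUnion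
        (fun i => ((hfin _).union ((hfin _).union (hfin _))))) hsub
    -- a stage after which `c` is never moved
    obtain ⟨γ, hγθ, hquiet⟩ :
        ∃ γ, γ < θ ∧ ∀ η, η < θ → γ ≤ η → (s.seq η)⁻¹ c = c := by
      rcases Mv.eq_empty_or_nonempty with hE | hne
      · refine ⟨0, hlim.pos, fun η hη hge => ?_⟩
        by_contra hcon
        exact absurd (hE ▸ (⟨hη, hcon⟩ : η ∈ Mv)) (Set.notMem_empty η)
      · have hmem : sSup Mv ∈ Mv := Set.Nonempty.csSup_mem hne hMvfin
        refine ⟨Order.succ (sSup Mv), hlim.succ_lt hmem.1, fun η hη hge => ?_⟩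
        by_contra hcon
        have : η ≤ sSup Mv := le_csSup hMvfin.bddAbove ⟨hη, hcon⟩
        exact absurd (lt_of_lt_of_le (Order.lt_succ_of_le this) hge) (lt_irrefl η)
    obtain ⟨d₀, hd₀⟩ := IH γ hγθ ((le_of_lt hγθ).trans hθ)
      (fun π => (hfin π).subset (occ_mono s π (le_of_lt hγθ))) c
    have hconst : ∀ η, γ ≤ η → η < θ → runId s η c = some d₀ := by
      intro η
      induction' η using ordLimInd with η IH2 η hlim2 IH2
      · intro hge _
        have : γ = 0 := le_antisymm (by exact_mod_cast hge) (zero_le : 0 ≤ γ)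
        rw [← this]; exact hd₀
      · intro hge hlt
        rcases eq_or_lt_of_le hge with heq | hlt'
        · rw [← heq]; exact hd₀
        · have hγη : γ ≤ η := Order.lt_succ_iff.1 hlt'
          have hηθ : η < θ := lt_trans (Order.lt_succ η) hlt
          rw [runId_succ, hquiet η hηθ hγη]
          exact IH2 hγη hηθ
      · intro hge hlt
        rcases eq_or_lt_of_le hge with heq | hγη
        · rw [← heq]; exact hd₀
        · rw [runId_limit s hlim2]
          exact eventualVal_eq_some hγη
            (fun ν hν hge2 => IH2 ν hν hge2 (lt_trans hν hlt))
    refine ⟨d₀, ?_⟩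
    rw [runId_limit s hlim]
    exact eventualVal_eq_some hγθ (fun η hη hge => hconst η hge hη)

end Stab

section Pers

universe w

variable {L : Type u}

theorem sig_fiber_finite (t : ExtCoord L) : {a : ExtCoord L | sig a = t}.Finite := by
  cases t with
  | neg r => exact (Set.finite_empty).subset (by intro a ha; cases a <;> simp_all [sig])
  | zero =>
    exact (Set.finite_singleton ExtCoord.zero).subset
      (by intro a ha; cases a <;> simp_all [sig])
  | pos r =>
    exact ((Set.finite_singleton (ExtCoord.neg r)).insert (ExtCoord.pos r)).subset
      (by intro a ha; cases a <;> simp_all [sig])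
  | negInf => exact (Set.finite_empty).subset (by intro a ha; cases a <;> simp_all [sig])
  | posInf =>
    exact ((Set.finite_singleton ExtCoord.negInf).insert ExtCoord.posInf).subset
      (by intro a ha; cases a <;> simp_all [sig])

/-- The window of a cell (cells with the same normalized coordinates) is finite. -/
theorem window_finite (c : ECell L) : {c' : ECell L | sigM c'.1.1 = sigM c.1.1}.Finite := by
  set S : Set (ExtCoord L) :=
    {a | sig a = sig c.1.1.1 ∨ sig a = sig c.1.1.2.1 ∨ sig a = sig c.1.1.2.2} with hS
  have hSfin : S.Finite := by
    have : S ⊆ {a | sig a = sig c.1.1.1} ∪ ({a | sig a = sig c.1.1.2.1} ∪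
        {a | sig a = sig c.1.1.2.2}) := by
      intro a ha
      exact ha.imp id (fun h => h.imp id id)
    exact Set.Finite.subset ((sig_fiber_finite _).union
      ((sig_fiber_finite _).union (sig_fiber_finite _))) this
  have hbig : Set.Finite ((S ×ˢ (S ×ˢ S)) ×ˢ (Set.univ : Set Axis)) :=
    Set.Finite.prod (hSfin.prod (hSfin.prod hSfin)) (Set.finite_univ)
  have key : {c' : ECell L | sigM c'.1.1 = sigM c.1.1} ⊆
      (Subtype.val : ECell L → (Triple L × Axis)) ⁻¹' ((S ×ˢ (S ×ˢ S)) ×ˢ Set.univ) := by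
    intro c' hc'
    show c'.1 ∈ (S ×ˢ (S ×ˢ S)) ×ˢ (Set.univ : Set Axis)
    have hc'' : sigM c'.1.1 = sigM c.1.1 := hc'
    have h1 : sig c'.1.1.1 ∈ sigM c.1.1 := by rw [← hc'']; simp [sigM]
    have h2 : sig c'.1.1.2.1 ∈ sigM c.1.1 := by rw [← hc'']; simp [sigM]
    have h3 : sig c'.1.1.2.2 ∈ sigM c.1.1 := by rw [← hc'']; simp [sigM]
    have hmem' : ∀ b : ExtCoord L, sig b ∈ sigM c.1.1 → b ∈ S := by
      intro b hb
      simp only [sigM, Multiset.insert_eq_cons, Multiset.mem_cons, Multiset.mem_singleton] at hb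
      exact hb.imp id (fun h => h.imp id id)
    exact ⟨⟨hmem' _ h1, hmem' _ h2, hmem' _ h3⟩, Set.mem_univ _⟩
  exact Set.Finite.subset
    (Set.Finite.preimage (Set.injOn_of_injective Subtype.val_injective) hbig) key

theorem sigM_basic {π : Equiv.Perm (ECell L)} (h : IsEBasic L π) (c : ECell L) :
    sigM ((π c).1.1) = sigM c.1.1 := by
  have := geomInv_basic h c
  unfold GeomInv at this
  exact congrArg (fun q => q.2.2.1) this

/-- Persistence of `NaC`: once a non-color appears, some cell of the same window carries a
non-color at every later stage. -/
theorem pers (s : EBasicSeq L) {X : Type w} (f0 : ECell L → Option X) :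
    ∀ θ : Ordinal.{u}, θ ≤ s.len → ∀ μ, μ ≤ θ → ∀ c : ECell L, run s.seq f0 μ c = none →
      ∃ c', sigM c'.1.1 = sigM c.1.1 ∧ run s.seq f0 θ c' = none := by
  intro θ
  induction' θ using ordLimInd with θ IH θ hlim IH
  · intro _ μ hμ c hc
    have h0 : μ = 0 := le_antisymm hμ (zero_le : 0 ≤ μ)
    exact ⟨c, rfl, by rwa [h0] at hc⟩
  · intro hθ μ hμ c hc
    rcases eq_or_lt_of_le hμ with heq | hlt
    · exact ⟨c, rfl, heq ▸ hc⟩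
    · have hμθ : μ ≤ θ := Order.lt_succ_iff.1 hlt
      obtain ⟨c', hsig, hnone⟩ := IH ((Order.le_succ θ).trans hθ) μ hμθ c hc
      have hb : IsEBasic L (s.seq θ) := s.basic θ (Order.succ_le_iff.1 hθ)
      refine ⟨(s.seq θ) c', ?_, ?_⟩
      · rw [sigM_basic hb c', hsig]
      · rw [run_succ]
        simpa using hnone
  · intro hθ μ hμ c hc
    rcases eq_or_lt_of_le hμ with heq | hμθ
    · exact ⟨c, rfl, heq ▸ hc⟩
    · by_contra hcon
      push_neg at hcon
      -- every window cell is eventually a fixed color below θ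
      have hW := window_finite c
      have hstab : ∀ c', sigM c'.1.1 = sigM c.1.1 →
          ∃ γ, γ < θ ∧ ∀ ν, ν < θ → γ ≤ ν → run s.seq f0 ν c' ≠ none := by
        intro c' hsig
        have hne := hcon c' hsig
        rw [run_limit _ _ _ hlim] at hne
        cases hval : eventualVal θ (fun η _ => run s.seq f0 η c') with
        | none => exact absurd hval hne
        | some v =>
          obtain ⟨γ, hγ, hst⟩ := eventualVal_some_elim hval
          exact ⟨γ, hγ, fun ν hν hge => by rw [hst ν hν hge]; exact Option.some_ne_none _⟩
      classical
      let γf : ECell L → Ordinal.{u} := fun c' =>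
        if h : ∃ γ, γ < θ ∧ ∀ ν, ν < θ → γ ≤ ν → run s.seq f0 ν c' ≠ none then h.choose else 0
      have hγf : ∀ c', sigM c'.1.1 = sigM c.1.1 →
          (γf c' < θ ∧ ∀ ν, ν < θ → γf c' ≤ ν → run s.seq f0 ν c' ≠ none) := by
        intro c' hsig
        have hex := hstab c' hsig
        simp only [γf, dif_pos hex]
        exact hex.choose_spec
      set B : Ordinal.{u} := (hW.toFinset).sup γf with hB
      have hBθ : B < θ := by
        rw [hB]
        refine Finset.sup_lt_iff hlim.pos |>.2 (fun c' hc' => ?_)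
        exact (hγf c' (hW.mem_toFinset.1 hc')).1
      -- pick a stage past all stabilization points, within `[μ, θ)`
      have hνθ : max B μ < θ := max_lt hBθ hμθ
      obtain ⟨c', hsig, hnone⟩ := IH (max B μ) hνθ ((le_of_lt hνθ).trans hθ) μ
        (le_max_right _ _) c hc
      have hmem : c' ∈ hW.toFinset := hW.mem_toFinset.2 hsig
      have hlast := (hγf c' hsig).2 (max B μ) hνθ
        (le_trans (Finset.le_sup hmem) (le_max_left _ _))
      exact hlast hnone

end Pers

section Directions

variable {L : Type u}

theorem efSolved_ne_none (c : ECell L) : efSolved L c ≠ none := by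
  unfold efSolved; split_ifs <;> simp

theorem occ_len_eq (s : EBasicSeq L) (π : Equiv.Perm (ECell L)) :
    occ s π s.len = {η | η < s.len ∧ s.seq η = π} := by
  ext η
  constructor
  · rintro ⟨h1, h2, h3⟩; exact ⟨h2, h3⟩
  · rintro ⟨h1, h2⟩; exact ⟨h1, h1, h2⟩

theorem univConv_of_twistFinite (s : EBasicSeq L) (h : s.TwistFinite) : s.UnivConv := by
  intro c
  obtain ⟨d, hd⟩ := runId_stab s s.len le_rfl
    (fun π => by rw [occ_len_eq]; exact h π) c
  show runId s s.len c ≠ none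
  rw [hd]; exact Option.some_ne_none _

theorem convSolved_of_twistFinite (s : EBasicSeq L) (h : s.TwistFinite) :
    s.ConvOver (efSolved L) := by
  intro c
  obtain ⟨d, hd⟩ := runId_stab s s.len le_rfl
    (fun π => by rw [occ_len_eq]; exact h π) c
  show run s.seq (efSolved L) s.len c ≠ none
  rw [runId_nat s s.len c d hd (efSolved L)]
  exact efSolved_ne_none d

/-- If the sequence is not twist-finite, there is a least "bad" limit stage, below which
everything is twist-finite, with some basic twist occurring cofinally. -/
theorem bad_limit (s : EBasicSeq L) (h : ¬ s.TwistFinite) :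
    ∃ lam : Ordinal.{u}, lam ≤ s.len ∧ Order.IsSuccLimit lam ∧
      (∀ μ, μ < lam → ∀ π, (occ s π μ).Finite) ∧
      ∃ π₀, IsEBasic L π₀ ∧ (∀ γ, γ < lam → ∃ η, η ∈ occ s π₀ lam ∧ γ ≤ η) := by
  rw [TwistSeq.TwistFinite] at h
  push_neg at h
  obtain ⟨π₁, hπ₁⟩ := h
  set Scls : Set Ordinal.{u} := {μ | ∃ π, (occ s π μ).Infinite} with hScls
  have hlen : s.len ∈ Scls := ⟨π₁, by rw [occ_len_eq]; exact hπ₁⟩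
  set lam := sInf Scls with hlam
  have hmem : lam ∈ Scls := csInf_mem ⟨s.len, hlen⟩
  obtain ⟨π₀, hπ₀⟩ := hmem
  have hle : lam ≤ s.len := csInf_le' hlen
  have hmin : ∀ μ, μ < lam → ∀ π, (occ s π μ).Finite := by
    intro μ hμ π
    by_contra hcon
    have hμS : μ ∈ Scls := ⟨π, hcon⟩
    exact absurd (csInf_le' hμS) (not_le_of_gt hμ)
  have hlim : Order.IsSuccLimit lam := by
    rw [Ordinal.isSuccLimit_iff, Order.isSuccPrelimit_iff_succ_lt]
    constructor
    · intro h0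
      obtain ⟨η, hη⟩ := hπ₀.nonempty
      rw [h0] at hη
      exact absurd hη.1 (not_lt_zero : ¬ η < 0)
    · intro a ha
      by_contra hcon
      have hla : lam ≤ Order.succ a := le_of_not_gt hcon
      have h1 : (occ s π₀ (Order.succ a)).Infinite := hπ₀.mono (occ_mono s π₀ hla)
      have h2 : (occ s π₀ a).Infinite := by
        refine ((h1.diff (Set.finite_singleton a)).mono ?_)
        rintro η ⟨⟨hη1, hη2⟩, hη3⟩
        refine ⟨?_, hη2⟩
        rcases lt_or_eq_of_le (Order.lt_succ_iff.1 hη1) with h | h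
        · exact h
        · exact absurd h (by simpa using hη3)
      exact absurd (hmin a ha π₀) h2
  have hcof : ∀ γ, γ < lam → ∃ η, η ∈ occ s π₀ lam ∧ γ ≤ η := by
    intro γ hγ
    by_contra hcon
    push_neg at hcon
    have hsub : occ s π₀ lam ⊆ occ s π₀ γ := by
      rintro η ⟨hη1, hη2, hη3⟩
      exact ⟨lt_of_not_ge (fun hge => absurd (hcon η ⟨hη1, hη2, hη3⟩) (not_lt_of_ge hge)), hη2, hη3⟩
    exact absurd (hmin γ hγ π₀) (hπ₀.mono hsub)
  have hbasic : IsEBasic L π₀ := by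
    obtain ⟨η, hη⟩ := hπ₀.nonempty
    rw [← hη.2.2]
    exact s.basic η hη.2.1
  exact ⟨lam, hle, hlim, hmin, π₀, hbasic, hcof⟩

/-- A canonical position in the layer `i = α`, with the other two coordinates `+∞`. -/
def mkPos (i : Axis) (α : ExtCoord L) : Triple L :=
  match i with
  | .x => (α, .posInf, .posInf)
  | .y => (.posInf, α, .posInf)
  | .z => (.posInf, .posInf, α)

def baseTag : Axis → Axis
  | .x => .y | .y => .z | .z => .x

def baseCell (i : Axis) (α : ExtCoord L) : ECell L :=
  ⟨(mkPos i α, baseTag i), by cases i <;> rfl⟩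

theorem mkPos_coord (i : Axis) (α : ExtCoord L) : (mkPos i α).coord i = α := by
  cases i <;> rfl

theorem rot_mkPos_ne (i : Axis) (α : ExtCoord L) : rot i (mkPos i α) ≠ mkPos i α := by
  cases i <;> simp [mkPos, rot, ExtCoord.reflect]

theorem rot2_mkPos_ne (i : Axis) (α : ExtCoord L) :
    rot i (rot i (mkPos i α)) ≠ mkPos i α := by
  cases i <;> simp [mkPos, rot, ExtCoord.reflect]

theorem rotInv_mkPos_ne (i : Axis) (α : ExtCoord L) : rotInv i (mkPos i α) ≠ mkPos i α := by
  cases i <;> simp [mkPos, rotInv, ExtCoord.reflect]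

theorem basic_moves_base {π : Equiv.Perm (ECell L)} {i : Axis} {α : ExtCoord L}
    (hf : π = equarterTurn i α ∨ π = equarterTurn i α ^ 2 ∨ π = (equarterTurn i α)⁻¹) :
    (π (baseCell i α)).1.1 ≠ (baseCell i α).1.1 := by
  have hguard : ((baseCell i α).1.1).coord i = α := mkPos_coord i α
  obtain hf | hf | hf := hf <;> subst hf
  · rw [equarterTurn_apply, if_pos hguard]
    exact rot_mkPos_ne i α
  · have h1 : equarterTurn i α (baseCell i α) = rotCellE i (baseCell i α) := by
      rw [equarterTurn_apply, if_pos hguard]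
    have hguard2 : ((rotCellE i (baseCell i α)).1.1).coord i = α := by
      rw [show (rotCellE i (baseCell i α)).1.1 = rot i (baseCell i α).1.1 from rfl,
        coord_rot_self]
      exact hguard
    have h2 : equarterTurn i α (rotCellE i (baseCell i α)) =
        rotCellE i (rotCellE i (baseCell i α)) := by
      rw [equarterTurn_apply, if_pos hguard2]
    rw [sq_apply, h1, h2]
    exact rot2_mkPos_ne i α
  · rw [equarterTurn_inv_apply, if_pos hguard]
    exact rotInv_mkPos_ne i α

theorem not_univConv_of_not_twistFinite (s : EBasicSeq L) (h : ¬ s.TwistFinite) :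
    ¬ s.UnivConv := by
  obtain ⟨lam, hle, hlim, hmin, π₀, hbasic, hcof⟩ := bad_limit s h
  obtain ⟨i, α, hf⟩ := hbasic
  set e : ECell L := baseCell i α with he
  have hmove : π₀ e ≠ e := fun hc => basic_moves_base hf (congrArg (fun c => c.1.1) hc)
  have hnone : runId s lam e = none := by
    rw [runId_limit s hlim]
    refine eventualVal_eq_none ?_
    rintro ⟨d, γ, hγ, hst⟩
    obtain ⟨η, hηocc, hγη⟩ := hcof γ hγ
    have hη : η < lam := hηocc.1
    have hsucc : Order.succ η < lam := hlim.succ_lt hη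
    have h1 : runId s (Order.succ η) e = some d :=
      hst _ hsucc (hγη.trans (le_of_lt (Order.lt_succ η)))
    rw [runId_succ, hηocc.2.2] at h1
    have h2 : runId s η e = some d := hst _ hη hγη
    have h3 := runId_inj s η _ _ _ h1 h2
    apply hmove
    conv_lhs => rw [← h3]
    exact Equiv.apply_symm_apply _ _
  intro hconv
  obtain ⟨c', hsig, hnone'⟩ := pers s (fun c : ECell L => some c) s.len le_rfl lam hle e hnone
  exact hconv c' hnone'

end Directions

section GeomCore

variable {L : Type u}

theorem efSolved_eq (c : ECell L) :
    efSolved L c = some (faceColor c.1.2 (sgB (c.1.1.coord c.1.2))) := by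
  have hv := c.2
  unfold efSolved
  rcases hcoord : c.1.1.coord c.1.2 with r | _ | r | _ | _ <;>
    rw [hcoord] at hv <;> simp_all [sgB, ExtCoord.isInfB]

theorem faceColor_inj : ∀ (a a' : Axis) (b b' : Bool),
    faceColor a b = faceColor a' b' → a = a' ∧ b = b' := by decide

theorem isInf_sgB_ext {a b : ExtCoord L} (ha : a.isInfB = true) (hb : b.isInfB = true)
    (h : sgB a = sgB b) : a = b := by
  cases a <;> cases b <;> simp_all [sgB, ExtCoord.isInfB]

theorem sig_sgB_ext {a b : ExtCoord L} (hs : sig a = sig b) (hb : sgB a = sgB b) : a = b := by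
  cases a <;> cases b <;> simp_all [sig, sgB]

theorem triple_ext {p q : Triple L} (h : ∀ u : Axis, p.coord u = q.coord u) : p = q := by
  obtain ⟨a, b, c⟩ := p; obtain ⟨a', b', c'⟩ := q
  have hx := h .x; have hy := h .y; have hz := h .z
  simp only [Triple.coord] at hx hy hz
  rw [hx, hy, hz]

theorem ecell_ext {c d : ECell L} (hp : c.1.1 = d.1.1) (ht : c.1.2 = d.1.2) : c = d := by
  apply Subtype.ext
  exact Prod.ext hp ht

theorem infCount3_coords {p : Triple L} (h : infCount p = 3) (u : Axis) :
    (p.coord u).isInfB = true := by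
  obtain ⟨a, b, c⟩ := p
  cases u <;> cases a <;> cases b <;> cases c <;>
    simp_all [infCount, Triple.coord, ExtCoord.isInfB]

theorem center_coord_zero {p : Triple L} (hz : zeroCount p = 2) {t : Axis}
    (hv : (p.coord t).isInfB = true) {u : Axis} (hu : u ≠ t) :
    p.coord u = ExtCoord.zero := by
  obtain ⟨a, b, c⟩ := p
  cases t <;> cases u <;> cases a <;> cases b <;> cases c <;>
    simp_all [zeroCount, Triple.coord, ExtCoord.isInfB, ExtCoord.isZeroB]

theorem wing_notinf_third {p : Triple L} (h2 : infCount p = 2) {t k u : Axis}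
    (ht : (p.coord t).isInfB = true) (hk : (p.coord k).isInfB = true) (htk : t ≠ k)
    (hut : u ≠ t) (huk : u ≠ k) : (p.coord u).isInfB = false := by
  obtain ⟨a, b, c⟩ := p
  cases t <;> cases k <;> cases u <;> cases a <;> cases b <;> cases c <;>
    simp_all [infCount, Triple.coord, ExtCoord.isInfB]

theorem zeroCount0_coord {p : Triple L} (hz : zeroCount p = 0) (u : Axis) :
    (p.coord u).isZeroB = false := by
  obtain ⟨a, b, c⟩ := p
  cases u <;> cases a <;> cases b <;> cases c <;>
    simp_all [zeroCount, Triple.coord, ExtCoord.isZeroB]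

theorem axis_cover {t k : Axis} (htk : t ≠ k) (u : Axis) :
    u = t ∨ u = k ∨ u = thirdAxis t k := by
  revert htk; revert u k t; decide

theorem thirdAxis_ne {t k : Axis} (htk : t ≠ k) :
    thirdAxis t k ≠ t ∧ thirdAxis t k ≠ k := by
  revert htk; revert k t; decide

theorem finAxis_eq {p : Triple L} {t k u : Axis} (htk : t ≠ k) (hut : u ≠ t) (huk : u ≠ k)
    (ht : (p.coord t).isInfB = true) (hk : (p.coord k).isInfB = true)
    (hu : (p.coord u).isInfB = false) : finAxis p = u := by
  obtain ⟨a, b, c⟩ := p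
  cases t <;> cases k <;> cases u <;>
    simp_all [finAxis, Triple.coord]

theorem sig_third {p q : Triple L} (hM : sigM p = sigM q) {u : Axis}
    (h2 : ∀ w, w ≠ u → p.coord w = q.coord w) : sig (p.coord u) = sig (q.coord u) := by
  obtain ⟨a, b, c⟩ := p; obtain ⟨a', b', c'⟩ := q
  simp only [sigM, Multiset.insert_eq_cons] at hM
  cases u
  · have hy := h2 .y (by decide); have hz := h2 .z (by decide)
    simp only [Triple.coord] at hy hz ⊢
    rw [← hy, ← hz] at hM
    exact (Multiset.cons_inj_left _).1 hM
  · have hx := h2 .x (by decide); have hz := h2 .z (by decide)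
    simp only [Triple.coord] at hx hz ⊢
    rw [← hx, ← hz] at hM
    exact (Multiset.cons_inj_left _).1 ((Multiset.cons_inj_right _).1 hM)
  · have hx := h2 .x (by decide); have hy := h2 .y (by decide)
    simp only [Triple.coord] at hx hy ⊢
    rw [← hx, ← hy] at hM
    exact Multiset.singleton_inj.1
      ((Multiset.cons_inj_right _).1 ((Multiset.cons_inj_right _).1 hM))

end GeomCore

section Cores

variable {L : Type u}

theorem geom_inf {c d : ECell L} (h : GeomInv c = GeomInv d) :
    infCount d.1.1 = infCount c.1.1 := (congrArg (fun q => q.1) h).symm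

theorem geom_zero {c d : ECell L} (h : GeomInv c = GeomInv d) :
    zeroCount d.1.1 = zeroCount c.1.1 := (congrArg (fun q => q.2.1) h).symm

theorem geom_sigM {c d : ECell L} (h : GeomInv c = GeomInv d) :
    sigM d.1.1 = sigM c.1.1 := (congrArg (fun q => q.2.2.1) h).symm

theorem geom_chi {c d : ECell L} (h : GeomInv c = GeomInv d)
    (hw : infCount c.1.1 = 2) (hz : zeroCount c.1.1 = 0) : chi d.1 = chi c.1 := by
  have hw' := geom_inf h
  have hz' := geom_zero h
  have h4 := congrArg (fun q => q.2.2.2) h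
  simp only [GeomInv] at h4
  rw [if_pos ⟨hw, hz⟩, if_pos (show infCount d.1.1 = 2 ∧ zeroCount d.1.1 = 0 from
    by rw [hw', hz']; exact ⟨hw, hz⟩)] at h4
  exact h4.symm

theorem corner_core (A B : Axis → ECell L)
    (hApos : ∀ j, (A j).1.1 = (A Axis.x).1.1)
    (hBpos : ∀ j, (B j).1.1 = (B Axis.x).1.1)
    (hAinj : ∀ j j', A j = A j' → j = j')
    (hAc : infCount (A Axis.x).1.1 = 3)
    (hBc : infCount (B Axis.x).1.1 = 3)
    (hcol : ∀ j, efSolved L (A j) = efSolved L (B j)) :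
    ∃ j, A j = B j := by
  have hkey : ∀ j, (B j).1.2 = (A j).1.2 ∧
      (A Axis.x).1.1.coord ((A j).1.2) = (B Axis.x).1.1.coord ((A j).1.2) := by
    intro j
    have h1 := hcol j
    rw [efSolved_eq, efSolved_eq] at h1
    injection h1 with h1
    obtain ⟨he, hsg⟩ := faceColor_inj _ _ _ _ h1
    refine ⟨he.symm, ?_⟩
    have hAinf : (((A Axis.x).1.1).coord ((A j).1.2)).isInfB = true := infCount3_coords hAc _
    have hBinf : (((B Axis.x).1.1).coord ((A j).1.2)).isInfB = true := infCount3_coords hBc _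
    apply isInf_sgB_ext hAinf hBinf
    rw [hApos j, ← he] at hsg
    rw [hBpos j] at hsg
    exact hsg
  have htAinj : Function.Injective (fun j => (A j).1.2) := by
    intro j j' he
    exact hAinj j j' (ecell_ext ((hApos j).trans (hApos j').symm) he)
  have htAsurj : Function.Surjective (fun j => (A j).1.2) :=
    (Finite.injective_iff_bijective.1 htAinj).2
  have hpos : (A Axis.x).1.1 = (B Axis.x).1.1 := by
    apply triple_ext
    intro u
    obtain ⟨j, hj⟩ := htAsurj u
    rw [← hj]
    exact (hkey j).2
  exact ⟨Axis.x, ecell_ext hpos ((hkey Axis.x).1).symm⟩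

theorem center_core (A B : ECell L) (hAz : zeroCount A.1.1 = 2) (hBz : zeroCount B.1.1 = 2)
    (hcol : efSolved L A = efSolved L B) : A = B := by
  have h1 := hcol
  rw [efSolved_eq, efSolved_eq] at h1
  injection h1 with h1
  obtain ⟨htag, hsg⟩ := faceColor_inj _ _ _ _ h1
  have hAv := A.2
  have hBv := B.2
  have hcoordt : A.1.1.coord A.1.2 = B.1.1.coord B.1.2 := isInf_sgB_ext hAv hBv hsg
  refine ecell_ext (triple_ext fun u => ?_) htag
  by_cases hu : u = A.1.2
  · rw [hu]
    rw [← htag] at hcoordt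
    exact hcoordt
  · rw [center_coord_zero hAz hAv hu, center_coord_zero hBz hBv (htag ▸ hu)]

theorem xor_cancel_right : ∀ a b w : Bool, (a ^^ w) = (b ^^ w) → a = b := by decide

theorem third_third {t1 t2 : Axis} (h : t1 ≠ t2) : thirdAxis (thirdAxis t1 t2) t1 = t2 := by
  revert h; revert t2 t1; decide

theorem wing_core (A1 A2 B1 B2 : ECell L)
    (hA12 : A1.1.1 = A2.1.1) (hB12 : B1.1.1 = B2.1.1)
    (hAne : A1.1.2 ≠ A2.1.2)
    (hw : infCount A1.1.1 = 2) (hz : zeroCount A1.1.1 = 0)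
    (hwB : infCount B1.1.1 = 2) (hzB : zeroCount B1.1.1 = 0)
    (hsig : sigM A1.1.1 = sigM B1.1.1)
    (hchi : chi A1.1 = chi B1.1)
    (hc1 : efSolved L A1 = efSolved L B1) (hc2 : efSolved L A2 = efSolved L B2) :
    A1 = B1 := by
  rw [efSolved_eq, efSolved_eq] at hc1 hc2
  injection hc1 with hc1
  injection hc2 with hc2
  obtain ⟨htag1, hsg1⟩ := faceColor_inj _ _ _ _ hc1
  obtain ⟨htag2, hsg2⟩ := faceColor_inj _ _ _ _ hc2
  -- the two tag axes and the third axis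
  have hv1 : ((A1.1.1).coord A1.1.2).isInfB = true := A1.2
  have hv2 : ((A1.1.1).coord A2.1.2).isInfB = true := by rw [hA12]; exact A2.2
  have hv1B : ((B1.1.1).coord A1.1.2).isInfB = true := by rw [htag1]; exact B1.2
  have hv2B : ((B1.1.1).coord A2.1.2).isInfB = true := by
    rw [htag2, hB12]; exact B2.2
  -- coordinates at the two tag axes agree
  have hco1 : A1.1.1.coord A1.1.2 = B1.1.1.coord A1.1.2 := by
    apply isInf_sgB_ext hv1 hv1B
    rw [← htag1] at hsg1
    exact hsg1
  have hco2 : A1.1.1.coord A2.1.2 = B1.1.1.coord A2.1.2 := by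
    apply isInf_sgB_ext hv2 hv2B
    rw [← htag2, ← hA12, ← hB12] at hsg2
    exact hsg2
  obtain ⟨hu1, hu2⟩ := thirdAxis_ne hAne
  set u := thirdAxis A1.1.2 A2.1.2 with hu
  have hUA : ((A1.1.1).coord u).isInfB = false := wing_notinf_third hw hv1 hv2 hAne hu1 hu2
  have hUB : ((B1.1.1).coord u).isInfB = false := wing_notinf_third hwB hv1B hv2B hAne hu1 hu2
  have hsig_u : sig (A1.1.1.coord u) = sig (B1.1.1.coord u) := by
    apply sig_third hsig
    intro w hwne
    rcases axis_cover hAne w with h | h | h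
    · rw [h]; exact hco1
    · rw [h]; exact hco2
    · exact absurd h hwne
  have hfA : finAxis A1.1.1 = u := finAxis_eq hAne hu1 hu2 hv1 hv2 hUA
  have hfB : finAxis B1.1.1 = u := finAxis_eq hAne hu1 hu2 hv1B hv2B hUB
  have hBt : B1.1.2 = A1.1.2 := htag1.symm
  have hchiA : chi A1.1 = ((sgB (A1.1.1.coord u)) ^^ ((sgB (A1.1.1.coord A1.1.2)) ^^
      ((sgB (A1.1.1.coord A2.1.2)) ^^ epsB u A1.1.2))) := by
    unfold chi
    rw [hfA, third_third hAne]
  have hchiB : chi B1.1 = ((sgB (B1.1.1.coord u)) ^^ ((sgB (B1.1.1.coord A1.1.2)) ^^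
      ((sgB (B1.1.1.coord A2.1.2)) ^^ epsB u A1.1.2))) := by
    unfold chi
    rw [hBt, hfB, third_third hAne]
  rw [hchiA, hchiB, ← hco1, ← hco2] at hchi
  have hsgu : sgB (A1.1.1.coord u) = sgB (B1.1.1.coord u) := xor_cancel_right _ _ _ hchi
  have hcou : A1.1.1.coord u = B1.1.1.coord u := sig_sgB_ext hsig_u hsgu
  refine ecell_ext (triple_ext fun w => ?_) htag1
  rcases axis_cover hAne w with h | h | h
  · rw [h]; exact hco1
  · rw [h]; exact hco2
  · rw [h]; exact hcou

end Cores

section MainSolved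

variable {L : Type u}

theorem run_succ_apply {Cl : Type v} {X : Type u} (σ : Ordinal.{v} → Equiv.Perm Cl)
    (f0 : Cl → Option X) (η : Ordinal.{v}) (c : Cl) :
    run σ f0 (Order.succ η) c = run σ f0 η ((σ η)⁻¹ c) := by
  rw [run_succ]

open Classical in
theorem basic_moves_gen {π : Equiv.Perm (ECell L)} {i : Axis} {α : ExtCoord L}
    (hf : π = equarterTurn i α ∨ π = equarterTurn i α ^ 2 ∨ π = (equarterTurn i α)⁻¹)
    (c : ECell L) (hguard : c.1.1.coord i = α)
    (h1 : rot i c.1.1 ≠ c.1.1) (h2 : rot i (rot i c.1.1) ≠ c.1.1)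
    (h3 : rotInv i c.1.1 ≠ c.1.1) :
    (π c).1.1 ≠ c.1.1 := by
  obtain hf | hf | hf := hf <;> subst hf
  · rw [equarterTurn_apply, if_pos hguard]; exact h1
  · have ha : equarterTurn i α c = rotCellE i c := by rw [equarterTurn_apply, if_pos hguard]
    have hguard2 : ((rotCellE i c).1.1).coord i = α := by
      rw [show (rotCellE i c).1.1 = rot i c.1.1 from rfl, coord_rot_self]; exact hguard
    have hb : equarterTurn i α (rotCellE i c) = rotCellE i (rotCellE i c) := by
      rw [equarterTurn_apply, if_pos hguard2]
    rw [sq_apply, ha, hb]; exact h2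
  · rw [equarterTurn_inv_apply, if_pos hguard]; exact h3

/-- Center position in the `i = 0` layer. -/
def mkCPos (i : Axis) : Triple L :=
  match i with
  | .x => (.zero, .zero, .posInf)
  | .y => (.zero, .zero, .posInf)
  | .z => (.zero, .posInf, .zero)

def cTag : Axis → Axis
  | .x => .z | .y => .z | .z => .y

def cCell (i : Axis) : ECell L := ⟨(mkCPos i, cTag i), by cases i <;> rfl⟩

theorem mkCPos_coord (i : Axis) : (mkCPos (L := L) i).coord i = ExtCoord.zero := by
  cases i <;> rfl

theorem mkCPos_zeroCount (i : Axis) : zeroCount (mkCPos (L := L) i) = 2 := by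
  cases i <;> rfl

theorem rot_mkCPos_ne (i : Axis) : rot i (mkCPos (L := L) i) ≠ mkCPos i := by
  cases i <;> simp [mkCPos, rot, ExtCoord.reflect]

theorem rot2_mkCPos_ne (i : Axis) : rot i (rot i (mkCPos (L := L) i)) ≠ mkCPos i := by
  cases i <;> simp [mkCPos, rot, ExtCoord.reflect]

theorem rotInv_mkCPos_ne (i : Axis) : rotInv i (mkCPos (L := L) i) ≠ mkCPos i := by
  cases i <;> simp [mkCPos, rotInv, ExtCoord.reflect]

def baseTag2 : Axis → Axis
  | .x => .z | .y => .x | .z => .y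

def baseCell2 (i : Axis) (α : ExtCoord L) : ECell L :=
  ⟨(mkPos i α, baseTag2 i), by cases i <;> rfl⟩

theorem baseTag_ne (i : Axis) : baseTag i ≠ baseTag2 i := by cases i <;> decide

theorem mkPos_infCount_fin {α : ExtCoord L} (hα : α.isInfB = false) (i : Axis) :
    infCount (mkPos i α) = 2 := by
  cases i <;> simp [mkPos, infCount, hα,
    show (ExtCoord.posInf : ExtCoord L).isInfB = true from rfl]

theorem mkPos_zeroCount_fin {α : ExtCoord L} (hα : α.isZeroB = false) (i : Axis) :
    zeroCount (mkPos i α) = 0 := by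
  cases i <;> simp [mkPos, zeroCount, hα,
    show (ExtCoord.posInf : ExtCoord L).isZeroB = false from rfl]

theorem mkPos_infCount_inf {α : ExtCoord L} (hα : α.isInfB = true) (i : Axis) :
    infCount (mkPos i α) = 3 := by
  cases i <;> simp [mkPos, infCount, hα,
    show (ExtCoord.posInf : ExtCoord L).isInfB = true from rfl]

def cornerCell (i : Axis) (α : ExtCoord L) (hα : α.isInfB = true) (j : Axis) : ECell L :=
  ⟨(mkPos i α, j), infCount3_coords (mkPos_infCount_inf hα i) j⟩

theorem not_convSolved_of_not_twistFinite (s : EBasicSeq L) (h : ¬ s.TwistFinite) :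
    ¬ s.ConvOver (efSolved L) := by
  obtain ⟨lam, hle, hlim, hmin, π₀, hbasic, hcof⟩ := bad_limit s h
  suffices hnone : ∃ e : ECell L, run s.seq (efSolved L) lam e = none by
    obtain ⟨e, he⟩ := hnone
    intro hconv
    obtain ⟨c', hsig, hnone'⟩ := pers s (efSolved L) s.len le_rfl lam hle e he
    exact hconv c' hnone'
  by_contra hcon
  push_neg at hcon
  have hstab : ∀ e : ECell L, ∃ w : Color, ∃ γ, γ < lam ∧ ∀ ν (hν : ν < lam), γ ≤ ν →
      run s.seq (efSolved L) ν e = some w := by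
    intro e
    have hne := hcon e
    rw [run_limit _ _ _ hlim] at hne
    cases hval : eventualVal lam (fun η _ => run s.seq (efSolved L) η e) with
    | none => exact absurd hval hne
    | some w =>
      obtain ⟨γ, hγ, hst⟩ := eventualVal_some_elim hval
      exact ⟨w, γ, hγ, hst⟩
  choose v γv hγv hst using hstab
  have hval_eq : ∀ e : ECell L, v (π₀ e) = v e := by
    intro e
    obtain ⟨η, hηocc, hγη⟩ := hcof (max (γv e) (γv (π₀ e)))
      (max_lt (hγv e) (hγv (π₀ e)))
    have hη : η < lam := hηocc.1
    have hsucc : Order.succ η < lam := hlim.succ_lt hη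
    have h1 : run s.seq (efSolved L) (Order.succ η) (π₀ e) = some (v (π₀ e)) :=
      hst (π₀ e) _ hsucc (le_trans (le_trans (le_max_right _ _) hγη)
        (le_of_lt (Order.lt_succ η)))
    rw [run_succ_apply, hηocc.2.2, Equiv.Perm.inv_def, Equiv.symm_apply_apply] at h1
    have h2 : run s.seq (efSolved L) η e = some (v e) :=
      hst e _ hη (le_trans (le_max_left _ _) hγη)
    rw [h2] at h1
    injection h1 with h1
    exact h1.symm
  obtain ⟨i, α, hf⟩ := hbasic
  have hbasic' : IsEBasic L π₀ := ⟨i, α, hf⟩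
  have getA : ∀ Γ, Γ < lam → ∀ e : ECell L, γv e ≤ Γ →
      ∃ A, runId s Γ e = some A ∧ GeomInv e = GeomInv A ∧ efSolved L A = some (v e) := by
    intro Γ hΓ e hγ
    obtain ⟨A, hA⟩ := runId_stab s Γ (le_of_lt (lt_of_lt_of_le hΓ hle))
      (fun π => hmin Γ hΓ π) e
    refine ⟨A, hA, runId_geom s Γ (le_of_lt (lt_of_lt_of_le hΓ hle)) e A hA, ?_⟩
    rw [← runId_nat s Γ e A hA (efSolved L)]
    exact hst e Γ hΓ hγ
  -- Case 1: face twists, killed by corner cells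
  have hcorner : α.isInfB = true → False := by
    intro hα
    set E : Axis → ECell L := cornerCell i α hα with hE
    set F : Axis → ECell L := fun j => π₀ (E j) with hF
    set Γ : Ordinal.{u} := (Finset.univ : Finset Axis).sup
      (fun j => max (γv (E j)) (γv (F j))) with hΓdef
    have hΓ : Γ < lam := by
      rw [hΓdef]
      refine Finset.sup_lt_iff hlim.pos |>.2 (fun j _ => max_lt (hγv _) (hγv _))
    have hγE : ∀ j, γv (E j) ≤ Γ := fun j =>
      le_trans (le_max_left _ _)
        (Finset.le_sup (f := fun j => max (γv (E j)) (γv (F j))) (Finset.mem_univ j))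
    have hγF : ∀ j, γv (F j) ≤ Γ := fun j =>
      le_trans (le_max_right _ _)
        (Finset.le_sup (f := fun j => max (γv (E j)) (γv (F j))) (Finset.mem_univ j))
    have hAex := fun j => getA Γ hΓ (E j) (hγE j)
    have hBex := fun j => getA Γ hΓ (F j) (hγF j)
    choose A hA1 hA2 hA3 using hAex
    choose B hB1 hB2 hB3 using hBex
    have hle' : Γ ≤ s.len := le_of_lt (lt_of_lt_of_le hΓ hle)
    have hEpos : ∀ j, (E j).1.1 = (E Axis.x).1.1 := fun j => rfl
    have hmoved : ∀ j, (F j).1.1 ≠ (E j).1.1 := fun j =>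
      basic_moves_gen hf (E j) (mkPos_coord i α) (rot_mkPos_ne i α)
        (rot2_mkPos_ne i α) (rotInv_mkPos_ne i α)
    obtain ⟨j, hABj⟩ := corner_core A B
      (fun j => runId_pos s Γ hle' _ _ _ _ (hA1 j) (hA1 Axis.x) rfl)
      (fun j => runId_pos s Γ hle' _ _ _ _ (hB1 j) (hB1 Axis.x)
        (pos_local_basic hbasic' rfl))
      (fun j j' hjj => by
        have := runId_inj s Γ _ _ _ (hA1 j) (hjj ▸ hA1 j')
        exact congrArg (fun c => c.1.2) this)
      (by rw [geom_inf (hA2 Axis.x)]; exact mkPos_infCount_inf hα i)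
      (by
        rw [geom_inf (hB2 Axis.x), ← geom_inf (geomInv_basic hbasic' (E Axis.x))]
        exact mkPos_infCount_inf hα i)
      (fun j => by rw [hA3 j, hB3 j, hval_eq (E j)])
    have heq : E j = F j := runId_inj s Γ _ _ _ (hA1 j) (hABj ▸ hB1 j)
    exact hmoved j (congrArg (fun c => c.1.1) heq).symm
  -- Case 2: zero-layer twists, killed by center cells
  have hcenter : α = ExtCoord.zero → False := by
    intro hα
    subst hα
    set e : ECell L := cCell i with he
    set f : ECell L := π₀ e with hfe
    set Γ : Ordinal.{u} := max (γv e) (γv f) with hΓdef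
    have hΓ : Γ < lam := max_lt (hγv e) (hγv f)
    obtain ⟨A, hA1, hA2, hA3⟩ := getA Γ hΓ e (le_max_left _ _)
    obtain ⟨B, hB1, hB2, hB3⟩ := getA Γ hΓ f (le_max_right _ _)
    have hAB : A = B := by
      apply center_core
      · rw [geom_zero hA2]; exact mkCPos_zeroCount i
      · rw [geom_zero hB2, ← geom_zero (geomInv_basic hbasic' e)]
        exact mkCPos_zeroCount i
      · rw [hA3, hB3, hfe, hval_eq e]
    have heq : e = f := runId_inj s Γ _ _ _ hA1 (hAB ▸ hB1)
    exact basic_moves_gen hf e (mkCPos_coord i) (rot_mkCPos_ne i)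
      (rot2_mkCPos_ne i) (rotInv_mkCPos_ne i) (congrArg (fun c => c.1.1) heq).symm
  -- Case 3: finite nonzero layers, killed by wing cells and chirality
  have hwing : α.isInfB = false → α.isZeroB = false → False := by
    intro hαi hαz
    set e1 : ECell L := baseCell i α with he1
    set e2 : ECell L := baseCell2 i α with he2
    set f1 : ECell L := π₀ e1 with hf1
    set f2 : ECell L := π₀ e2 with hf2
    set Γ : Ordinal.{u} := max (max (γv e1) (γv e2)) (max (γv f1) (γv f2)) with hΓdef
    have hΓ : Γ < lam := max_lt (max_lt (hγv e1) (hγv e2)) (max_lt (hγv f1) (hγv f2))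
    obtain ⟨A1, hA11, hA12, hA13⟩ := getA Γ hΓ e1
      (le_trans (le_max_left _ _) (le_max_left _ _))
    obtain ⟨A2, hA21, hA22, hA23⟩ := getA Γ hΓ e2
      (le_trans (le_max_right _ _) (le_max_left _ _))
    obtain ⟨B1, hB11, hB12, hB13⟩ := getA Γ hΓ f1
      (le_trans (le_max_left _ _) (le_max_right _ _))
    obtain ⟨B2, hB21, hB22, hB23⟩ := getA Γ hΓ f2
      (le_trans (le_max_right _ _) (le_max_right _ _))
    have hle' : Γ ≤ s.len := le_of_lt (lt_of_lt_of_le hΓ hle)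
    have hwA : infCount e1.1.1 = 2 := mkPos_infCount_fin hαi i
    have hzA : zeroCount e1.1.1 = 0 := mkPos_zeroCount_fin hαz i
    have hgf1 : GeomInv f1 = GeomInv e1 := geomInv_basic hbasic' e1
    have hAB : A1 = B1 := by
      apply wing_core A1 A2 B1 B2
      · exact runId_pos s Γ hle' _ _ _ _ hA11 hA21 rfl
      · exact runId_pos s Γ hle' _ _ _ _ hB11 hB21 (pos_local_basic hbasic' rfl)
      · intro htags
        have hpos : A1.1.1 = A2.1.1 := runId_pos s Γ hle' _ _ _ _ hA11 hA21 rfl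
        have : e1 = e2 := runId_inj s Γ _ _ _ hA11 ((ecell_ext hpos htags) ▸ hA21)
        exact baseTag_ne i (congrArg (fun c => c.1.2) this)
      · rw [geom_inf hA12]; exact hwA
      · rw [geom_zero hA12]; exact hzA
      · rw [geom_inf hB12, ← geom_inf hgf1]; exact hwA
      · rw [geom_zero hB12, ← geom_zero hgf1]; exact hzA
      · rw [geom_sigM hA12, geom_sigM hB12]; exact geom_sigM hgf1
      · have hcA : chi A1.1 = chi e1.1 := geom_chi hA12 hwA hzA
        have hwf : infCount f1.1.1 = 2 := by rw [← geom_inf hgf1]; exact hwA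
        have hzf : zeroCount f1.1.1 = 0 := by rw [← geom_zero hgf1]; exact hzA
        have hcB : chi B1.1 = chi f1.1 := geom_chi hB12 hwf hzf
        have hcf : chi f1.1 = chi e1.1 := geom_chi hgf1.symm hwA hzA
        rw [hcA, hcB, hcf]
      · rw [hA13, hB13, hf1, hval_eq e1]
      · rw [hA23, hB23, hf2, hval_eq e2]
    have heq : e1 = f1 := runId_inj s Γ _ _ _ hA11 (hAB ▸ hB11)
    exact basic_moves_gen hf e1 (mkPos_coord i α) (rot_mkPos_ne i α)
      (rot2_mkPos_ne i α) (rotInv_mkPos_ne i α) (congrArg (fun c => c.1.1) heq).symm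
  rcases α with r | _ | r | _ | _
  · exact hwing rfl rfl
  · exact hcenter rfl
  · exact hwing rfl rfl
  · exact hcorner rfl
  · exact hcorner rfl

end MainSolved

end InfRubik
open InfRubik in
/-- For the edged cube, convergence over the solved configuration, universal convergence,
and twist-finiteness coincide. -/
theorem edged_convergence_tfae {L : Type u} [Infinite L] (s : EBasicSeq L) :
    (s.ConvOver (efSolved L) ↔ s.UnivConv) ∧ (s.UnivConv ↔ s.TwistFinite) := by
  by_cases h : s.TwistFinite
  · exact ⟨⟨fun _ => univConv_of_twistFinite s h, fun _ => convSolved_of_twistFinite s h⟩,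
      ⟨fun _ => h, fun _ => univConv_of_twistFinite s h⟩⟩
  · exact ⟨⟨fun hc => absurd hc (not_convSolved_of_not_twistFinite s h),
      fun hu => absurd hu (not_univConv_of_not_twistFinite s h)⟩,
      ⟨fun hu => absurd hu (not_univConv_of_not_twistFinite s h), fun htf => absurd htf h⟩⟩
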